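/- Let V(α,β) be the Virasoro module of intermediate series with basis {v_i : i ∈ ℤ}, action L_i v_j = (α + j + βi)v_{i+j}, C v_j = 0. Fix a nonzero integer n and a ∈ ℂ* with (n−1)α ∈ ℤ, and ξ ∈ ℂ. Then the linear map δ defined by δ(v_i) = ξa^i v_{(n−1)α + ni} − v_i makes (V(α,β), δ) a 1-differential module over (Vir, d_{n,a}). -/

import Mathlib

/-- The defining bracket relations of the Virasoro algebra on a family `L : ℤ → V`
and a central element `C`. -/
def VirRel {V : Type*} [LieRing V] [LieAlgebra ℂ V] (L : ℤ → V) (C : V) : Prop :=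
  (∀ m n : ℤ, ⁅L m, L n⁆ = ((n : ℂ) - (m : ℂ)) • L (m + n)
      + (if m + n = 0 then ((m : ℂ) ^ 3 - (m : ℂ)) / 12 else 0) • C) ∧
  ∀ m : ℤ, ⁅C, L m⁆ = 0

/-- `f` has the values of `φ_n ∘ τ_a` on the basis:
`f(L_i) = (a^i/n)(L_{ni} - δ_{i,0}((n²-1)/24)C)` and `f(C) = nC`. -/
def PhiTau {V : Type*} [LieRing V] [LieAlgebra ℂ V] (L : ℤ → V) (C : V)
    (n : ℤ) (a : ℂ) (f : V →ₗ[ℂ] V) : Prop :=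
  (∀ i : ℤ, f (L i) = (a ^ i / (n : ℂ)) •
      (L (n * i) - (if i = 0 then ((n : ℂ) ^ 2 - 1) / 24 else 0) • C)) ∧
  f C = (n : ℂ) • C


/-- if `(n-1)α = k ∈ ℤ`, then `δ(v_i) = ξ a^i v_{(n-1)α+ni} - v_i`
defines a 1-differential module structure on the module `V(α,β)` of intermediate
series over `(Vir, d_{n,a})`. -/
theorem stmt_13 {V : Type*} [LieRing V] [LieAlgebra ℂ V]
    (L : ℤ → V) (C : V)
    (b : Module.Basis (Option ℤ) ℂ V) (hbL : ∀ i : ℤ, b (some i) = L i) (hbC : b none = C)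
    (hrel : VirRel L C)
    {M : Type*} [AddCommGroup M] [Module ℂ M] [LieRingModule V M] [LieModule ℂ V M]
    (α β : ℂ) (v : ℤ → M)
    (bv : Module.Basis ℤ ℂ M) (hbv : ∀ i : ℤ, bv i = v i)
    (hact : ∀ i j : ℤ, ⁅L i, v j⁆ = (α + (j : ℂ) + β * (i : ℂ)) • v (i + j))
    (hactC : ∀ m : M, ⁅C, m⁆ = 0)
    (n : ℤ) (hn : n ≠ 0) (a : ℂ) (ha : a ≠ 0)
    (f : V →ₗ[ℂ] V) (hf : PhiTau L C n a f)
    (k : ℤ) (hk : ((n : ℂ) - 1) * α = (k : ℂ)) (ξ : ℂ)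
    (δ : M →ₗ[ℂ] M)
    (hδ : ∀ i : ℤ, δ (v i) = (ξ * a ^ i) • v (k + n * i) - v i) :
    ∀ (x : V) (m : M),
      δ ⁅x, m⁆ = ⁅f x - x, m⁆ + ⁅x, δ m⁆ + ⁅f x - x, δ m⁆ := by
  classical
  letI : LieRing (Module.End ℂ M) := LieRing.ofAssociativeRing
  set T : V →ₗ[ℂ] Module.End ℂ M := (LieModule.toEnd ℂ V M).toLinearMap with hT
  have hTapp : ∀ (x : V) (m : M), T x m = ⁅x, m⁆ := fun x m => rfl
  obtain ⟨hf1, hf2⟩ := hf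
  have hn' : (n : ℂ) ≠ 0 := Int.cast_ne_zero.mpr hn
  -- key computation on basis elements
  have key : ∀ (o : Option ℤ) (j : ℤ),
      δ ⁅b o, bv j⁆ = ⁅f (b o) - b o, bv j⁆ + ⁅b o, δ (bv j)⁆ + ⁅f (b o) - b o, δ (bv j)⁆ := by
    rintro (_ | i) j
    · rw [hbC, hf2]
      simp [hactC, sub_lie, smul_lie]
    · rw [hbL, hbv, hf1]
      rw [hact, map_smul, hδ]
      rw [hδ j]
      simp only [sub_lie, smul_lie, lie_sub, lie_smul, hact, hactC, smul_zero, sub_zero,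
        lie_zero]
      have h2 : i + (k + n * j) = k + n * j + i := by ring
      have h3 : n * i + (k + n * j) = k + n * (i + j) := by ring
      rw [h2, h3]
      have hapow : a ^ (i + j) = a ^ i * a ^ j := zpow_add₀ ha i j
      have hkk : (k : ℂ) = ((n : ℂ) - 1) * α := hk.symm
      match_scalars <;>
      · push_cast
        try simp only [hkk, hapow]
        try field_simp
        try ring
  -- extend linearly in x, for basis m
  have key2 : ∀ (x : V) (j : ℤ),
      δ ⁅x, bv j⁆ = ⁅f x - x, bv j⁆ + ⁅x, δ (bv j)⁆ + ⁅f x - x, δ (bv j)⁆ := by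
    intro x j
    have : δ.comp (T.flip (bv j)) =
        (T.flip (bv j)).comp (f - LinearMap.id) + T.flip (δ (bv j)) +
          (T.flip (δ (bv j))).comp (f - LinearMap.id) := by
      apply b.ext
      intro o
      simpa [hTapp, LinearMap.sub_apply, sub_lie] using key o j
    have h := LinearMap.congr_fun this x
    simpa [hTapp, LinearMap.sub_apply, sub_lie] using h
  -- extend linearly in m
  intro x m
  have : δ.comp (T x) =
      T (f x - x) + (T x).comp δ + (T (f x - x)).comp δ := by
    apply bv.ext
    intro j
    simpa [hTapp] using key2 x j
  have h := LinearMap.congr_fun this m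
  simpa [hTapp] using h
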